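/- Let n ≥ 2 be an integer. Let (R_1,Z_1),…,(R_n,Z_n) be i.i.d. copies of a pair (R,Z) of square-integrable real random variables satisfying Cov(R_k, Z_j) = 0 for all j,k and Cov(R_k R_{k'}, Z_j Z_{j'}) = 0 for all j,j',k,k'. Suppose R takes values in {−1, 1} with P(R = 1) = p, and write σ_Z² = Var(Z). Define the Dr. GRPO estimator G = (1/n) Σ_{j=1}^n (R_j − (1/n) Σ_{k=1}^n R_k) Z_j. Then Var(G) = ((n−1)/n²) · 4 σ_Z² p (1−p). -/

import Mathlib

open MeasureTheory ProbabilityTheory Finset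

/-- Covariance of two real random variables. -/
noncomputable def covar {Ω : Type*} [MeasurableSpace Ω] (μ : Measure Ω) (X Y : Ω → ℝ) : ℝ :=
  (∫ ω, X ω * Y ω ∂μ) - (∫ ω, X ω ∂μ) * (∫ ω, Y ω ∂μ)

private lemma aux_integrable_mul {Ω : Type*} [MeasurableSpace Ω] {μ : Measure Ω}
    {f g : Ω → ℝ} (hf : MemLp f 2 μ) (hg : MemLp g 2 μ) :
    Integrable (fun ω => f ω * g ω) μ := by
  have h : MemLp (f • g) 1 μ := hg.smul hf
  have := memLp_one_iff_integrable.mp h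
  exact this

/-- **Dr. GRPO gradient variance (binary reward).** -/
theorem drgrpo_variance_binary
    {Ω : Type*} [MeasurableSpace Ω] (μ : Measure Ω) [IsProbabilityMeasure μ]
    (n : ℕ) (hn : 2 ≤ n)
    (R Z : Ω → ℝ) (Rv Zv : Fin n → Ω → ℝ)
    (hR2 : MemLp R 2 μ) (hZ2 : MemLp Z 2 μ)
    (hident : ∀ i, IdentDistrib (fun ω => (Rv i ω, Zv i ω)) (fun ω => (R ω, Z ω)) μ μ)
    (hindep : iIndepFun (fun i ω => (Rv i ω, Zv i ω)) μ)
    (hcov1 : ∀ j k, covar μ (Rv k) (Zv j) = 0)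
    (hcov2 : ∀ j j' k k', covar μ (fun ω => Rv k ω * Rv k' ω)
      (fun ω => Zv j ω * Zv j' ω) = 0)
    (p : ℝ) (hRval : ∀ ω, R ω = 1 ∨ R ω = -1)
    (hp : (μ {ω | R ω = 1}).toReal = p) :
    variance (fun ω =>
        (1 / (n : ℝ)) * ∑ j, (Rv j ω - (1 / (n : ℝ)) * ∑ k, Rv k ω) * Zv j ω) μ
      = ((n : ℝ) - 1) / (n : ℝ) ^ 2 * (4 * variance Z μ * p * (1 - p)) := by
  have hn0 : (n : ℝ) ≠ 0 := by
    have : 0 < n := by omega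
    exact_mod_cast this.ne'
  -- basic distributional facts
  have hRid : ∀ i, IdentDistrib (Rv i) R μ μ := fun i => (hident i).comp measurable_fst
  have hZid : ∀ i, IdentDistrib (Zv i) Z μ μ := fun i => (hident i).comp measurable_snd
  have hRv2 : ∀ i, MemLp (Rv i) 2 μ := fun i => (hRid i).symm.memLp_snd hR2
  have hZv2 : ∀ i, MemLp (Zv i) 2 μ := fun i => (hZid i).symm.memLp_snd hZ2
  have hRvm : ∀ i, AEStronglyMeasurable (Rv i) μ := fun i => (hRv2 i).aestronglyMeasurable
  have hZvm : ∀ i, AEStronglyMeasurable (Zv i) μ := fun i => (hZv2 i).aestronglyMeasurable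
  set a := ∫ ω, R ω ∂μ with ha_def
  set b := ∫ ω, Z ω ∂μ with hb_def
  set m2 := ∫ ω, Z ω * Z ω ∂μ with hm2_def
  have haR : ∀ i, ∫ ω, Rv i ω ∂μ = a := fun i => (hRid i).integral_eq
  have hbZ : ∀ i, ∫ ω, Zv i ω ∂μ = b := fun i => (hZid i).integral_eq
  have hZsq : ∀ i, ∫ ω, Zv i ω * Zv i ω ∂μ = m2 := fun i =>
    ((hZid i).comp (measurable_id.mul measurable_id)).integral_eq
  -- a.e. values of Rv i
  have hSmeas : MeasurableSet {x : ℝ | x = 1 ∨ x = -1} := by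
    have : {x : ℝ | x = 1 ∨ x = -1} = {1, -1} := by ext x; simp
    rw [this]
    exact (measurableSet_singleton (-1 : ℝ)).insert 1
  have hRvae : ∀ i, ∀ᵐ ω ∂μ, Rv i ω = 1 ∨ Rv i ω = -1 := by
    intro i
    rw [ae_iff]
    have h1 : {ω | ¬(Rv i ω = 1 ∨ Rv i ω = -1)} = (Rv i) ⁻¹' {x : ℝ | x = 1 ∨ x = -1}ᶜ := rfl
    rw [h1, ← Measure.map_apply_of_aemeasurable (hRvm i).aemeasurable hSmeas.compl,
      (hRid i).map_eq,
      Measure.map_apply_of_aemeasurable hR2.aestronglyMeasurable.aemeasurable hSmeas.compl]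
    have h2 : R ⁻¹' {x : ℝ | x = 1 ∨ x = -1}ᶜ = ∅ := by
      ext ω; simp [hRval ω]
    rw [h2]; exact measure_empty
  have hRsq : ∀ i, (fun ω => Rv i ω * Rv i ω) =ᵐ[μ] (fun _ => (1 : ℝ)) := by
    intro i
    filter_upwards [hRvae i] with ω hω
    rcases hω with h | h <;> rw [h] <;> norm_num
  -- second moments of Rv
  have hf : ∀ k k', ∫ ω, Rv k ω * Rv k' ω ∂μ = if k = k' then 1 else a * a := by
    intro k k'
    by_cases h : k = k'
    · subst h
      simp only [if_pos rfl]
      rw [integral_congr_ae (hRsq k)]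
      simp
    · simp only [if_neg h]
      have hi : IndepFun (Rv k) (Rv k') μ :=
        (hindep.indepFun h).comp measurable_fst measurable_fst
      rw [hi.integral_fun_mul_eq_mul_integral (hRvm k) (hRvm k'), haR k, haR k']
  have hg : ∀ j j', ∫ ω, Zv j ω * Zv j' ω ∂μ = if j = j' then m2 else b * b := by
    intro j j'
    by_cases h : j = j'
    · subst h; simp only [if_pos rfl]; exact hZsq j
    · simp only [if_neg h]
      have hi : IndepFun (Zv j) (Zv j') μ :=
        (hindep.indepFun h).comp measurable_snd measurable_snd
      rw [hi.integral_fun_mul_eq_mul_integral (hZvm j) (hZvm j'), hbZ j, hbZ j']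
  -- covariance hypotheses as factorization
  have hRZ : ∀ j k, ∫ ω, Rv k ω * Zv j ω ∂μ = a * b := by
    intro j k
    have h := hcov1 j k
    unfold covar at h
    rw [haR k, hbZ j] at h
    linarith
  have hfac : ∀ j j' k k', ∫ ω, (Rv k ω * Rv k' ω) * (Zv j ω * Zv j' ω) ∂μ
      = (if k = k' then 1 else a * a) * (if j = j' then m2 else b * b) := by
    intro j j' k k'
    have h := hcov2 j j' k k'
    unfold covar at h
    rw [hf k k', hg j j'] at h
    linarith
  -- integrability
  have hZZint : ∀ j j', Integrable (fun ω => Zv j ω * Zv j' ω) μ :=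
    fun j j' => aux_integrable_mul (hZv2 j) (hZv2 j')
  have hRZint : ∀ k j, Integrable (fun ω => Rv k ω * Zv j ω) μ :=
    fun k j => aux_integrable_mul (hRv2 k) (hZv2 j)
  have hRRZZint : ∀ k k' j j',
      Integrable (fun ω => (Rv k ω * Rv k' ω) * (Zv j ω * Zv j' ω)) μ := by
    intro k k' j j'
    refine (hZZint j j').abs.mono'
      (((hRvm k).mul (hRvm k')).mul ((hZvm j).mul (hZvm j'))) ?_
    filter_upwards [hRvae k, hRvae k'] with ω h1 h2
    have e1 : |Rv k ω| = 1 := by rcases h1 with h | h <;> simp [h]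
    have e2 : |Rv k' ω| = 1 := by rcases h2 with h | h <;> simp [h]
    simp only [Real.norm_eq_abs, abs_mul, e1, e2, one_mul, le_refl]
  -- the summands
  set W : Fin n → Ω → ℝ :=
    fun j ω => (Rv j ω - (1 / (n : ℝ)) * ∑ k, Rv k ω) * Zv j ω with hW
  -- pointwise expansions
  have hWexp : ∀ j, W j = fun ω => Rv j ω * Zv j ω - ∑ k, (1 / (n : ℝ)) * (Rv k ω * Zv j ω) := by
    intro j
    funext ω
    simp only [hW, ← Finset.sum_mul, ← Finset.mul_sum]
    ring
  have hWWexp : ∀ j j', (fun ω => W j ω * W j' ω) = fun ω =>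
      (Rv j ω * Rv j' ω) * (Zv j ω * Zv j' ω)
      - (∑ k, (1 / (n : ℝ)) * ((Rv k ω * Rv j' ω) * (Zv j ω * Zv j' ω)))
      - (∑ k, (1 / (n : ℝ)) * ((Rv j ω * Rv k ω) * (Zv j ω * Zv j' ω)))
      + (∑ k, ∑ k', (1 / (n : ℝ)) ^ 2 * ((Rv k ω * Rv k' ω) * (Zv j ω * Zv j' ω))) := by
    intro j j'
    funext ω
    simp only [hW, ← Finset.sum_mul, ← Finset.mul_sum]
    ring
  -- integrability of W and products
  have hWint : ∀ j, Integrable (W j) μ := by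
    intro j
    rw [hWexp j]
    exact (hRZint j j).sub
      (integrable_finset_sum _ fun k _ => (hRZint k j).const_mul _)
  have hWWint : ∀ j j', Integrable (fun ω => W j ω * W j' ω) μ := by
    intro j j'
    rw [hWWexp j j']
    exact (((hRRZZint j j' j j').sub
        (integrable_finset_sum _ fun k _ => (hRRZZint k j' j j').const_mul _)).sub
        (integrable_finset_sum _ fun k _ => (hRRZZint j k j j').const_mul _)).add
      (integrable_finset_sum _ fun k _ =>
        integrable_finset_sum _ fun k' _ => (hRRZZint k k' j j').const_mul _)
  -- means
  have hWmean : ∀ j, ∫ ω, W j ω ∂μ = 0 := by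
    intro j
    rw [hWexp j]
    rw [integral_sub (hRZint j j)
        (integrable_finset_sum _ fun k _ => (hRZint k j).const_mul _),
      integral_finset_sum _ fun k _ => (hRZint k j).const_mul _]
    simp only [integral_const_mul, hRZ]
    rw [Finset.sum_const, Finset.card_univ, Fintype.card_fin]
    rw [nsmul_eq_mul]
    field_simp
    ring
  -- sums of the Rv second-moment matrix
  have hsumF : ∀ j' : Fin n,
      (∑ k : Fin n, if k = j' then (1 : ℝ) else a * a) = 1 + ((n : ℝ) - 1) * (a * a) := by
    intro j'
    have h1 : ∀ k : Fin n, (if k = j' then (1 : ℝ) else a * a)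
        = (if k = j' then 1 - a * a else 0) + a * a := by
      intro k; by_cases h : k = j' <;> simp [h]
    rw [Finset.sum_congr rfl fun k _ => h1 k, Finset.sum_add_distrib]
    simp [Finset.sum_ite_eq', Finset.card_univ]
    ring
  have hsumF2 : ∀ j : Fin n,
      (∑ k : Fin n, if j = k then (1 : ℝ) else a * a) = 1 + ((n : ℝ) - 1) * (a * a) := by
    intro j
    have h1 : ∀ k : Fin n, (if j = k then (1 : ℝ) else a * a) = if k = j then 1 else a * a := by
      intro k; by_cases h : j = k <;> simp [h, eq_comm]
    rw [Finset.sum_congr rfl fun k _ => h1 k]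
    exact hsumF j
  -- the key second moment of the products W j * W j'
  have hWW : ∀ j j', ∫ ω, W j ω * W j' ω ∂μ
      = ((if j = j' then 1 else a * a) - (1 + ((n : ℝ) - 1) * (a * a)) / n)
        * (if j = j' then m2 else b * b) := by
    intro j j'
    rw [hWWexp j j']
    have i1 : Integrable (fun ω => (Rv j ω * Rv j' ω) * (Zv j ω * Zv j' ω)) μ :=
      hRRZZint j j' j j'
    have i2 : Integrable (fun ω => ∑ k, (1 / (n : ℝ))
        * ((Rv k ω * Rv j' ω) * (Zv j ω * Zv j' ω))) μ :=
      integrable_finset_sum _ fun k _ => (hRRZZint k j' j j').const_mul _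
    have i3 : Integrable (fun ω => ∑ k, (1 / (n : ℝ))
        * ((Rv j ω * Rv k ω) * (Zv j ω * Zv j' ω))) μ :=
      integrable_finset_sum _ fun k _ => (hRRZZint j k j j').const_mul _
    have i4 : Integrable (fun ω => ∑ k, ∑ k', (1 / (n : ℝ)) ^ 2
        * ((Rv k ω * Rv k' ω) * (Zv j ω * Zv j' ω))) μ :=
      integrable_finset_sum _ fun k _ =>
        integrable_finset_sum _ fun k' _ => (hRRZZint k k' j j').const_mul _
    have i12 : Integrable (fun ω => (Rv j ω * Rv j' ω) * (Zv j ω * Zv j' ω)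
        - ∑ k, (1 / (n : ℝ)) * ((Rv k ω * Rv j' ω) * (Zv j ω * Zv j' ω))) μ := i1.sub i2
    have i123 : Integrable (fun ω => ((Rv j ω * Rv j' ω) * (Zv j ω * Zv j' ω)
        - ∑ k, (1 / (n : ℝ)) * ((Rv k ω * Rv j' ω) * (Zv j ω * Zv j' ω)))
        - ∑ k, (1 / (n : ℝ)) * ((Rv j ω * Rv k ω) * (Zv j ω * Zv j' ω))) μ := i12.sub i3
    rw [integral_add i123 i4, integral_sub i12 i3, integral_sub i1 i2,
      integral_finset_sum _ fun k _ => (hRRZZint k j' j j').const_mul _,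
      integral_finset_sum _ fun k _ => (hRRZZint j k j j').const_mul _,
      integral_finset_sum _ fun k _ =>
        integrable_finset_sum _ fun k' _ => (hRRZZint k k' j j').const_mul _]
    have hin : ∀ k : Fin n, ∫ ω, ∑ k', (1 / (n : ℝ)) ^ 2
        * ((Rv k ω * Rv k' ω) * (Zv j ω * Zv j' ω)) ∂μ
        = ∑ k' : Fin n, (1 / (n : ℝ)) ^ 2
            * ((if k = k' then 1 else a * a) * (if j = j' then m2 else b * b)) := by
      intro k
      rw [integral_finset_sum _ fun k' _ => (hRRZZint k k' j j').const_mul _]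
      refine Finset.sum_congr rfl fun k' _ => ?_
      rw [integral_const_mul, hfac]
    rw [Finset.sum_congr rfl fun k _ => hin k]
    simp only [integral_const_mul, hfac]
    simp only [← Finset.mul_sum, ← Finset.sum_mul]
    rw [hsumF j', hsumF2 j]
    have hdd : (∑ i : Fin n, ∑ i' : Fin n, if i = i' then (1 : ℝ) else a * a)
        = n * (1 + ((n : ℝ) - 1) * (a * a)) := by
      rw [Finset.sum_congr rfl fun i (_ : i ∈ univ) => hsumF2 i, Finset.sum_const,
        Finset.card_univ, Fintype.card_fin]
      simp only [nsmul_eq_mul]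
    rw [hdd]
    by_cases h : j = j'
    · subst h
      simp only [if_pos rfl]
      field_simp
      ring
    · simp only [if_neg h]
      field_simp
      ring
  -- the mean of G
  have hGmean : ∫ ω, (1 / (n : ℝ)) * ∑ j, W j ω ∂μ = 0 := by
    rw [integral_const_mul, integral_finset_sum _ fun j _ => hWint j]
    simp [hWmean]
  -- memℒp of G
  have hSaesm : AEStronglyMeasurable (fun ω => ∑ k, Rv k ω) μ := by
    apply Finset.aestronglyMeasurable_fun_sum
    intro k _
    exact hRvm k
  have hW2 : ∀ j, MemLp (W j) 2 μ := by
    intro j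
    refine MemLp.of_le ((hZv2 j).const_mul 2) ?_ ?_
    · exact ((hRvm j).sub (hSaesm.const_mul _)).mul (hZvm j)
    · have hall : ∀ᵐ ω ∂μ, ∀ k, Rv k ω = 1 ∨ Rv k ω = -1 := ae_all_iff.mpr hRvae
      filter_upwards [hall] with ω hω
      have h1 : |Rv j ω| ≤ 1 := by rcases hω j with h | h <;> simp [h]
      have h2 : |∑ k, Rv k ω| ≤ n := by
        calc |∑ k, Rv k ω| ≤ ∑ k, |Rv k ω| := Finset.abs_sum_le_sum_abs _ _
          _ ≤ ∑ _k : Fin n, (1 : ℝ) :=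
              Finset.sum_le_sum fun k _ => by rcases hω k with h | h <;> simp [h]
          _ = n := by simp
      simp only [hW, Real.norm_eq_abs, abs_mul]
      have h3 : |Rv j ω - 1 / (n : ℝ) * ∑ k, Rv k ω| ≤ 2 := by
        have h4 : |1 / (n : ℝ) * ∑ k, Rv k ω| ≤ 1 := by
          rw [abs_mul]
          have hnpos : (0 : ℝ) < n := by positivity
          rw [abs_of_pos (by positivity : (0:ℝ) < 1 / (n:ℝ))]
          rw [div_mul_eq_mul_div, one_mul, div_le_one hnpos]
          exact h2
        calc |Rv j ω - 1 / (n : ℝ) * ∑ k, Rv k ω|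
            ≤ |Rv j ω| + |1 / (n : ℝ) * ∑ k, Rv k ω| := abs_sub _ _
          _ ≤ 2 := by linarith
      calc |Rv j ω - 1 / (n : ℝ) * ∑ k, Rv k ω| * |Zv j ω| ≤ 2 * |Zv j ω| := by
            apply mul_le_mul_of_nonneg_right h3 (abs_nonneg _)
        _ = |(2 : ℝ)| * |Zv j ω| := by norm_num
  have hG2 : MemLp (fun ω => (1 / (n : ℝ)) * ∑ j, W j ω) 2 μ :=
    (memLp_finset_sum Finset.univ fun j _ => hW2 j).const_mul _
  -- second moment of G
  have hGsq : (fun ω => ((1 / (n : ℝ)) * ∑ j, W j ω) ^ 2)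
      = fun ω => ∑ j : Fin n, ∑ j' : Fin n, (1 / (n : ℝ)) ^ 2 * (W j ω * W j' ω) := by
    funext ω
    rw [mul_pow, sq (∑ j, W j ω), Finset.sum_mul_sum]
    rw [Finset.mul_sum]
    refine Finset.sum_congr rfl fun j _ => ?_
    rw [Finset.mul_sum]
  have hGsqint : ∫ ω, ((1 / (n : ℝ)) * ∑ j, W j ω) ^ 2 ∂μ
      = ∑ j : Fin n, ∑ j' : Fin n, (1 / (n : ℝ)) ^ 2
          * (((if j = j' then 1 else a * a) - (1 + ((n : ℝ) - 1) * (a * a)) / n)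
            * (if j = j' then m2 else b * b)) := by
    rw [show (fun ω => ((1 / (n : ℝ)) * ∑ j, W j ω) ^ 2)
        = fun ω => ∑ j : Fin n, ∑ j' : Fin n, (1 / (n : ℝ)) ^ 2 * (W j ω * W j' ω) from hGsq]
    rw [integral_finset_sum _ fun j _ =>
      integrable_finset_sum _ fun j' _ => (hWWint j j').const_mul _]
    refine Finset.sum_congr rfl fun j _ => ?_
    rw [integral_finset_sum _ fun j' _ => (hWWint j j').const_mul _]
    refine Finset.sum_congr rfl fun j' _ => ?_
    rw [integral_const_mul, hWW j j']
  -- compute a = 2p - 1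
  have hap : a = 2 * p - 1 := by
    obtain ⟨R', hR'meas, hRR'⟩ := hR2.aestronglyMeasurable.aemeasurable
    have hBmeas : MeasurableSet (R' ⁻¹' {1}) := hR'meas (measurableSet_singleton 1)
    have hAB : μ {ω | R ω = 1} = μ (R' ⁻¹' {1}) := by
      apply measure_congr
      filter_upwards [hRR'] with ω h
      change (R ω = 1) = (R' ω = 1)
      rw [h]
    have hRform : R =ᵐ[μ] fun ω => 2 * (R' ⁻¹' {1}).indicator (fun _ => (1 : ℝ)) ω - 1 := by
      filter_upwards [hRR'] with ω hω
      by_cases hb : R' ω = 1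
      · have hr : R ω = 1 := by rw [hω]; exact hb
        norm_num [Set.indicator_apply, hb, hr]
      · have hr : R ω = -1 := by
          rcases hRval ω with h | h
          · exact absurd (hω ▸ h) hb
          · exact h
        norm_num [Set.indicator_apply, hb, hr]
    have hind : ∫ ω, (R' ⁻¹' {1}).indicator (fun _ => (1 : ℝ)) ω ∂μ
        = (μ (R' ⁻¹' {1})).toReal := by
      rw [integral_indicator_const (1 : ℝ) hBmeas]
      simp
      rfl
    rw [ha_def, integral_congr_ae hRform,
      integral_sub (((integrable_const (1:ℝ)).indicator hBmeas).const_mul 2) (integrable_const 1),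
      integral_const_mul]
    have : (fun ω => (R' ⁻¹' {1}).indicator (fun _ => (1:ℝ)) ω) =
        (R' ⁻¹' {1}).indicator (fun _ => (1:ℝ)) := rfl
    rw [hind]
    simp [← hAB, hp]
  -- variance of Z
  have hvarZ : variance Z μ = m2 - b ^ 2 := by
    rw [variance_eq_sub hZ2]
    congr 1
    rw [hm2_def]
    congr 1
    funext ω
    simp [sq]
  -- put it all together
  rw [show (fun ω => (1 / (n : ℝ)) * ∑ j, (Rv j ω - (1 / (n : ℝ)) * ∑ k, Rv k ω) * Zv j ω)
      = fun ω => (1 / (n : ℝ)) * ∑ j, W j ω from rfl]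
  rw [variance_eq_sub hG2]
  have hpow : (fun ω => (1 / (n : ℝ)) * ∑ j, W j ω) ^ 2
      = fun ω => ((1 / (n : ℝ)) * ∑ j, W j ω) ^ 2 := by
    funext ω; simp [sq]
  rw [show μ[(fun ω => (1 / (n : ℝ)) * ∑ j, W j ω) ^ 2]
      = ∫ ω, ((1 / (n : ℝ)) * ∑ j, W j ω) ^ 2 ∂μ from by rw [hpow]]
  rw [hGsqint, hGmean, hvarZ]
  -- collapse the double sum
  have hcollapse : ∀ (D E : ℝ), (∑ _j : Fin n, ∑ j' : Fin n, if _j = j' then D else E)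
      = n * D + ((n : ℝ) ^ 2 - n) * E := by
    intro D E
    have h1 : ∀ j : Fin n, (∑ j' : Fin n, if j = j' then D else E) = D + ((n : ℝ) - 1) * E := by
      intro j
      have h2 : ∀ j' : Fin n, (if j = j' then D else E)
          = (if j' = j then D - E else 0) + E := by
        intro j'
        by_cases h : j = j'
        · subst h; simp only [eq_self_iff_true, if_true]; ring
        · rw [if_neg h, if_neg fun hh => h hh.symm]; ring
      rw [Finset.sum_congr rfl fun j' _ => h2 j', Finset.sum_add_distrib]
      simp [Finset.sum_ite_eq', Finset.card_univ]
      ring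
    rw [Finset.sum_congr rfl fun j _ => h1 j, Finset.sum_const, Finset.card_univ,
      Fintype.card_fin]
    simp
    ring
  have hterm : ∀ j j' : Fin n, (1 / (n : ℝ)) ^ 2
      * (((if j = j' then 1 else a * a) - (1 + ((n : ℝ) - 1) * (a * a)) / n)
        * (if j = j' then m2 else b * b))
      = if j = j' then (1 / (n : ℝ)) ^ 2 * ((1 - (1 + ((n : ℝ) - 1) * (a * a)) / n) * m2)
        else (1 / (n : ℝ)) ^ 2 * ((a * a - (1 + ((n : ℝ) - 1) * (a * a)) / n) * (b * b)) := by
    intro j j'; by_cases h : j = j' <;> simp [h]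
  have hsum_eq : (∑ j : Fin n, ∑ j' : Fin n, (1 / (n : ℝ)) ^ 2
        * (((if j = j' then 1 else a * a) - (1 + ((n : ℝ) - 1) * (a * a)) / n)
          * (if j = j' then m2 else b * b)))
      = ∑ j : Fin n, ∑ j' : Fin n,
          (if j = j' then (1 / (n : ℝ)) ^ 2 * ((1 - (1 + ((n : ℝ) - 1) * (a * a)) / n) * m2)
          else (1 / (n : ℝ)) ^ 2 * ((a * a - (1 + ((n : ℝ) - 1) * (a * a)) / n) * (b * b))) :=
    Finset.sum_congr rfl fun j _ => Finset.sum_congr rfl fun j' _ => hterm j j'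
  rw [hsum_eq, hcollapse, hap]
  field_simp
  ring
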